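/- Let $V : [T] \to \mathbb{R}$ with $V(0)=0$, $|V(t) - V(t-1)| \le 1$, and define for constants $C_1 = 42\sqrt{K\log(1/\delta)}$ a threshold. Suppose that for every interval $[t_1, t_2]$ on which $V(t) \ge C_1\sqrt{t}$ for all $t \in [t_1,t_2]$ it holds $V(t_2) - V(t_1 - 1) \le 11\sqrt{K t_2 \log(2/\delta)}$. Then $V(t) \le 53\sqrt{Kt\log(2/\delta)}$ for all $t \in [T]$. -/
import Mathlib


open Finset Real

theorem stmt_17 (T K : ℕ) (hK : 1 ≤ K) (δ : ℝ) (hδ0 : 0 < δ) (hδ1 : δ < 1)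
    (hlog : 1 ≤ Real.log (1 / δ))
    (V : ℕ → ℝ) (hV0 : V 0 = 0)
    (hstep : ∀ t ∈ Finset.Icc 1 T, |V t - V (t - 1)| ≤ 1)
    (C₁ : ℝ) (hC₁ : C₁ = 42 * Real.sqrt (K * Real.log (1 / δ)))
    (hint : ∀ t₁ t₂, 1 ≤ t₁ → t₁ ≤ t₂ → t₂ ≤ T →
      (∀ t ∈ Finset.Icc t₁ t₂, C₁ * Real.sqrt t ≤ V t) →
      V t₂ - V (t₁ - 1) ≤ 11 * Real.sqrt (K * t₂ * Real.log (2 / δ))) :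
    ∀ t ∈ Finset.Icc 1 T, V t ≤ 53 * Real.sqrt (K * t * Real.log (2 / δ)) := by
  classical
  intro t ht
  simp only [Finset.mem_Icc] at ht
  obtain ⟨ht1, htT⟩ := ht
  by_contra hcon
  push_neg at hcon
  have hδ2 : (0:ℝ) < 1/δ := by positivity
  have hL12 : Real.log (1/δ) ≤ Real.log (2/δ) := by
    apply Real.log_le_log hδ2
    gcongr
    norm_num
  have hL2pos : (1:ℝ) ≤ Real.log (2/δ) := le_trans hlog hL12
  have hL1pos : (0:ℝ) ≤ Real.log (1/δ) := by linarith
  have hK0 : (1:ℝ) ≤ (K:ℝ) := by exact_mod_cast hK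
  have ht0 : (1:ℝ) ≤ (t:ℝ) := by exact_mod_cast ht1
  have hKt : (1:ℝ) ≤ (K:ℝ) * t :=
    le_trans hK0 (le_mul_of_one_le_right (by linarith) ht0)
  have hS2one : (1:ℝ) ≤ Real.sqrt ((K:ℝ) * t * Real.log (2/δ)) := by
    rw [show (1:ℝ) = Real.sqrt 1 by simp]
    apply Real.sqrt_le_sqrt
    calc (1:ℝ) ≤ (K:ℝ) * t := hKt
      _ ≤ (K:ℝ) * t * Real.log (2/δ) := le_mul_of_one_le_right (by linarith) hL2pos
  have key : ∀ s : ℕ, s ≤ t →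
      C₁ * Real.sqrt s ≤ 42 * Real.sqrt ((K:ℝ) * t * Real.log (2/δ)) := by
    intro s hst
    have hst' : (s:ℝ) ≤ (t:ℝ) := by exact_mod_cast hst
    have hs0 : (0:ℝ) ≤ (s:ℝ) := Nat.cast_nonneg s
    rw [hC₁, mul_assoc, ← Real.sqrt_mul (by positivity)]
    have h1 : (K:ℝ) * Real.log (1/δ) * s ≤ (K:ℝ) * Real.log (2/δ) * s :=
      mul_le_mul_of_nonneg_right
        (mul_le_mul_of_nonneg_left hL12 (by positivity)) hs0
    have h2 : (K:ℝ) * Real.log (2/δ) * s ≤ (K:ℝ) * t * Real.log (2/δ) := by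
      have e : (K:ℝ) * Real.log (2/δ) * s = (K:ℝ) * s * Real.log (2/δ) := by ring
      rw [e]
      exact mul_le_mul_of_nonneg_right
        (mul_le_mul_of_nonneg_left hst' (by positivity)) (by linarith)
    have hs := Real.sqrt_le_sqrt
      (show (K:ℝ) * Real.log (1/δ) * s ≤ (K:ℝ) * t * Real.log (2/δ) by linarith)
    linarith
  have hQt : 1 ≤ t ∧ ∀ r ∈ Finset.Icc t t, C₁ * Real.sqrt r ≤ V r := by
    refine ⟨ht1, ?_⟩
    intro r hr
    simp only [Finset.mem_Icc] at hr
    have hrt : r = t := le_antisymm hr.2 hr.1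
    subst hrt
    have := key r le_rfl
    linarith
  obtain ⟨t₁, ⟨ht₁1, hP⟩, hmin⟩ := Nat.lt_wfRel.wf.has_min
    {s | 1 ≤ s ∧ ∀ r ∈ Finset.Icc s t, C₁ * Real.sqrt r ≤ V r} ⟨t, hQt⟩
  have ht₁t : t₁ ≤ t := by
    have h' : ¬ t < t₁ := hmin t hQt
    omega
  rcases eq_or_lt_of_le ht₁1 with h1 | h2
  · have hP1 : ∀ r ∈ Finset.Icc 1 t, C₁ * Real.sqrt r ≤ V r := by
      rw [h1]; exact hP
    have h := hint 1 t le_rfl ht1 htT hP1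
    simp only [Nat.sub_self, hV0] at h
    linarith
  · have h2' : 2 ≤ t₁ := h2
    have hnm : ¬ (1 ≤ t₁ - 1 ∧ ∀ r ∈ Finset.Icc (t₁ - 1) t, C₁ * Real.sqrt r ≤ V r) := by
      intro hmem
      exact hmin (t₁ - 1) hmem (show t₁ - 1 < t₁ by omega)
    push_neg at hnm
    obtain ⟨r, hr, hVr⟩ := hnm (by omega)
    simp only [Finset.mem_Icc] at hr
    have hrlt : r < t₁ := by
      by_contra hge
      push_neg at hge
      have := hP r (by simp only [Finset.mem_Icc]; exact ⟨hge, hr.2⟩)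
      linarith
    have hreq : r = t₁ - 1 := by omega
    subst hreq
    have h := hint t₁ t ht₁1 ht₁t htT hP
    have hkey := key (t₁ - 1) (by omega)
    linarith
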